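/- Define f(x) = 2[x^{α+1} + (1-x)^{α+1}]² - [x^{2α+1} + (1-x)^{2α+1}] for a fixed real α > 0. Then for all x ∈ [0,1], f(x) ≥ 2^{-2α}, with equality at x = 1/2. -/

import Mathlib

open Real

-- key inequality for x in [1/2, 1)
lemma key10 (α x : ℝ) (hα : 0 < α) (hx : 1/2 ≤ x) (hx1 : x < 1) :
    (2:ℝ) ^ (-(2*α)) ≤
      2 * (x ^ (α+1) + (1-x) ^ (α+1)) ^ 2 - (x ^ (2*α+1) + (1-x) ^ (2*α+1)) := by
  have ha : (0:ℝ) < x := by linarith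
  have hb : (0:ℝ) < 1 - x := by linarith
  set a := x with hadef
  set b := 1 - x with hbdef
  set t : ℝ := a - b with htdef
  have ht0 : 0 ≤ t := by simp [htdef, hadef, hbdef]; linarith
  have ht1 : t < 1 := by simp [htdef, hadef, hbdef]; linarith
  have hat : a = (1 + t) / 2 := by simp [htdef, hadef, hbdef]; ring
  have hbt : b = (1 - t) / 2 := by simp [htdef, hadef, hbdef]; ring
  set A := a ^ (α+1) with hA
  set B := b ^ (α+1) with hB
  set C := a ^ (2*α+1) with hC
  set D := b ^ (2*α+1) with hD
  -- identity pieces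
  have hA2 : A ^ 2 = a * C := by
    rw [hA, hC, sq, ← Real.rpow_add ha, ← Real.rpow_one_add' (le_of_lt ha) (by positivity)]
    ring_nf
  have hB2 : B ^ 2 = b * D := by
    rw [hB, hD, sq, ← Real.rpow_add hb, ← Real.rpow_one_add' (le_of_lt hb) (by positivity)]
    ring_nf
  have hAB : A * B = (a * b) ^ (α+1) := (Real.mul_rpow ha.le hb.le).symm
  -- powers of two
  have h4 : (4:ℝ) ^ α = (2:ℝ) ^ (2*α) := by
    rw [show (4:ℝ) = (2:ℝ)^(2:ℝ) by
      rw [show ((2:ℝ):ℝ) = ((2:ℕ):ℝ) by norm_num, Real.rpow_natCast]; norm_num,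
      ← Real.rpow_mul (by norm_num)]
  have h2pos : (0:ℝ) < (2:ℝ) ^ (2*α) := Real.rpow_pos_of_pos (by norm_num) _
  have hrw : (2:ℝ) ^ (-(2*α)) = 1 / (2:ℝ) ^ (2*α) := by
    rw [Real.rpow_neg (by norm_num), one_div]
  -- bound C ≥ (1+(2α+1)t)/2^(2α+1)
  have hCt : (1 + (2*α+1)*t) / (2:ℝ)^(2*α+1) ≤ C := by
    rw [hC, hat, Real.div_rpow (by linarith) (by norm_num)]
    exact div_le_div_of_nonneg_right
      (one_add_mul_self_le_rpow_one_add (by linarith) (by linarith))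
      (Real.rpow_pos_of_pos (by norm_num) _).le
  -- bound D ≤ (1-t)/2^(2α+1)
  have hDt : D ≤ (1 - t) / (2:ℝ)^(2*α+1) := by
    rw [hD, hbt, Real.div_rpow (by linarith) (by norm_num)]
    refine div_le_div_of_nonneg_right ?_ (Real.rpow_pos_of_pos (by norm_num) _).le
    calc (1-t) ^ (2*α+1) ≤ (1-t) ^ (1:ℝ) :=
          Real.rpow_le_rpow_of_exponent_ge (by linarith) (by linarith) (by linarith)
      _ = 1 - t := Real.rpow_one _
  -- bound A*B ≥ (1-(α+1)t^2)/4^(α+1)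
  have habt : a * b = (1 - t^2) / 4 := by rw [hat, hbt]; ring
  have hABt : (1 - (α+1)*t^2) / (4:ℝ)^(α+1) ≤ A * B := by
    rw [hAB, habt, Real.div_rpow (by nlinarith) (by norm_num)]
    refine div_le_div_of_nonneg_right ?_ (Real.rpow_pos_of_pos (by norm_num) _).le
    have := one_add_mul_self_le_rpow_one_add (s := -t^2) (p := α+1)
        (by nlinarith) (by linarith)
    calc 1 - (α+1)*t^2 = 1 + (α+1)*(-t^2) := by ring
      _ ≤ (1 + -t^2) ^ (α+1) := this
      _ = (1 - t^2) ^ (α+1) := by ring_nf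
  -- combine
  have h21 : (2:ℝ)^(2*α+1) = 2 * (2:ℝ)^(2*α) := by
    rw [Real.rpow_add (by norm_num), Real.rpow_one]; ring
  have h41 : (4:ℝ)^(α+1) = 4 * (2:ℝ)^(2*α) := by
    rw [Real.rpow_add (by norm_num), Real.rpow_one, h4]; ring
  have key : 2 * (A + B) ^ 2 - (C + D) = t * (C - D) + 4 * (A * B) := by
    have hab1 : a + b = 1 := by simp [hadef, hbdef]
    have : (A+B)^2 = A^2 + B^2 + 2*(A*B) := by ring
    rw [this, hA2, hB2, htdef]
    linear_combination (C + D) * hab1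
  rw [key, hrw]
  have hCD : (2*α+2) * t / (2:ℝ)^(2*α+1) ≤ C - D := by
    have := sub_le_sub hCt hDt
    calc (2*α+2) * t / (2:ℝ)^(2*α+1)
        = (1 + (2*α+1)*t)/(2:ℝ)^(2*α+1) - (1-t)/(2:ℝ)^(2*α+1) := by ring
      _ ≤ C - D := by linarith
  have h2p1 : (0:ℝ) < (2:ℝ)^(2*α+1) := Real.rpow_pos_of_pos (by norm_num) _
  have step1 : t * ((2*α+2) * t / (2:ℝ)^(2*α+1)) ≤ t * (C - D) := by
    apply mul_le_mul_of_nonneg_left hCD ht0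
  have step2 : 4 * ((1 - (α+1)*t^2) / (4:ℝ)^(α+1)) ≤ 4 * (A*B) := by linarith
  have e1 : t * ((2*α+2) * t / (2:ℝ)^(2*α+1)) = (α+1)*t^2 / (2:ℝ)^(2*α) := by
    rw [h21]; field_simp
  have e2 : 4 * ((1 - (α+1)*t^2) / (4:ℝ)^(α+1)) = (1 - (α+1)*t^2) / (2:ℝ)^(2*α) := by
    rw [h41]; field_simp
  have : (α+1)*t^2 / (2:ℝ)^(2*α) + (1 - (α+1)*t^2) / (2:ℝ)^(2*α) = 1 / (2:ℝ)^(2*α) := by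
    field_simp
    ring
  linarith [step1, step2, e1, e2]

theorem stmt10 (α : ℝ) (hα : 0 < α) :
    (∀ x : ℝ, 0 ≤ x → x ≤ 1 →
      (2:ℝ) ^ (-(2*α)) ≤
        2 * (x ^ (α+1) + (1-x) ^ (α+1)) ^ 2 - (x ^ (2*α+1) + (1-x) ^ (2*α+1))) ∧
    2 * (((1:ℝ)/2) ^ (α+1) + (1-(1:ℝ)/2) ^ (α+1)) ^ 2
        - (((1:ℝ)/2) ^ (2*α+1) + (1-(1:ℝ)/2) ^ (2*α+1)) = (2:ℝ) ^ (-(2*α)) := by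
  have hle1 : (2:ℝ) ^ (-(2*α)) ≤ 1 := by
    have : (2:ℝ) ^ (-(2*α)) ≤ (2:ℝ) ^ (0:ℝ) :=
      Real.rpow_le_rpow_of_exponent_le (by norm_num) (by linarith)
    rwa [Real.rpow_zero] at this
  have hane : α + 1 ≠ 0 := by positivity
  have hane2 : 2*α + 1 ≠ 0 := by positivity
  constructor
  · intro x hx0 hx1
    rcases eq_or_lt_of_le hx0 with rfl | hx0'
    · simp only [sub_zero, Real.one_rpow, Real.zero_rpow hane, Real.zero_rpow hane2]
      norm_num
      linarith
    rcases eq_or_lt_of_le hx1 with rfl | hx1'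
    · simp only [sub_self, Real.one_rpow, Real.zero_rpow hane, Real.zero_rpow hane2]
      norm_num
      linarith
    rcases le_or_gt (1/2) x with hge | hlt
    · exact key10 α x hα hge hx1'
    · have h := key10 α (1-x) hα (by linarith) (by linarith)
      rw [show (1:ℝ)-(1-x) = x from by ring] at h
      calc (2:ℝ) ^ (-(2*α))
          ≤ 2 * ((1-x) ^ (α+1) + x ^ (α+1)) ^ 2 - ((1-x) ^ (2*α+1) + x ^ (2*α+1)) := h
        _ = 2 * (x ^ (α+1) + (1-x) ^ (α+1)) ^ 2 - (x ^ (2*α+1) + (1-x) ^ (2*α+1)) := by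
            ring
  · have h0 : ((1:ℝ)-1/2) = 1/2 := by norm_num
    rw [h0]
    have hp : ∀ p : ℝ, ((1:ℝ)/2) ^ p = (2:ℝ) ^ (-p) := by
      intro p
      rw [one_div, ← Real.rpow_neg_one (2:ℝ), ← Real.rpow_mul (by norm_num)]
      ring_nf
    rw [hp, hp, Real.rpow_neg (by norm_num), Real.rpow_neg (by norm_num),
      Real.rpow_neg (by norm_num), Real.rpow_add (by norm_num) α 1,
      Real.rpow_add (by norm_num) (2*α) 1, Real.rpow_one]
    have h2a : (2:ℝ)^α > 0 := Real.rpow_pos_of_pos (by norm_num) _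
    have h2aa : ((2:ℝ)^α)^2 = (2:ℝ)^(2*α) := by
      rw [sq, ← Real.rpow_add (by norm_num)]; ring_nf
    have h2b : (2:ℝ)^(2*α) > 0 := Real.rpow_pos_of_pos (by norm_num) _
    field_simp
    nlinarith [h2aa]
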